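/- For Simion's map η_σ from signed permutations to permutations of {1,…,n+1}, two signed permutations related by a cover in weak order have the same image if and only if the cover transposes two adjacent entries of opposite signs in the one-line notation; equivalently, if π and τ agree except that two adjacent one-line entries are swapped, then η_σ(π) = η_σ(τ) iff the two swapped entries have opposite signs, and if π and τ agree except in the sign of the first entry then η_σ(π) ≠ η_σ(τ). -/

import Mathlib

/-- `f` is the one-line notation of a signed permutation of `{±1, …, ±n}`. -/
def IsSignedPerm (n : ℕ) (f : Fin n → ℤ) : Prop :=
  (∀ i, 1 ≤ (f i).natAbs ∧ (f i).natAbs ≤ n) ∧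
    Function.Injective fun i => (f i).natAbs

/-- Simion's map: form the sequence `(−πₙ)⋯(−π₁) 0 π₁⋯πₙ`, extract the subsequence of
nonnegative entries, and add `1` to each entry. -/
def etaSigma (n : ℕ) (f : Fin n → ℤ) : List ℤ :=
  ((((List.ofFn f).map fun x => -x).reverse ++ 0 :: List.ofFn f).filter
    fun x => decide (0 ≤ x)).map fun x => x + 1

section Aux

private def pz : ℤ → Bool := fun x => decide (0 ≤ x)
private def qz : ℤ → Bool := fun x => decide (x ≤ 0)

private lemma split0 (a c : List ℤ) (b d : List ℤ) (ha : (0:ℤ) ∉ a) (hc : (0:ℤ) ∉ c) :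
    a ++ 0 :: b = c ++ 0 :: d ↔ a = c ∧ b = d := by
  constructor
  · intro h
    induction a generalizing c with
    | nil =>
      cases c with
      | nil => simpa using h
      | cons x cs =>
        simp only [List.nil_append, List.cons_append, List.cons.injEq] at h
        exact absurd (h.1 ▸ (List.mem_cons_self : x ∈ x :: cs)) hc
    | cons x as ih =>
      cases c with
      | nil =>
        simp only [List.nil_append, List.cons_append, List.cons.injEq] at h
        exact absurd (h.1.symm ▸ (List.mem_cons_self : x ∈ x :: as)) ha
      | cons y cs =>
        simp only [List.cons_append, List.cons.injEq] at h
        have := ih cs (fun hm => ha (List.mem_cons_of_mem _ hm))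
          (fun hm => hc (List.mem_cons_of_mem _ hm)) h.2
        exact ⟨by simp [h.1, this.1], this.2⟩
  · rintro ⟨rfl, rfl⟩; rfl

private lemma eta_eq {n : ℕ} (f : Fin n → ℤ) :
    etaSigma n f =
      ((((List.ofFn f).filter qz).reverse.map fun x => -x) ++
        0 :: (List.ofFn f).filter pz).map fun x => x + 1 := by
  show ((((List.ofFn f).map fun x => -x).reverse ++ 0 :: List.ofFn f).filter pz).map
      (fun x => x + 1) = _
  rw [List.filter_append, List.filter_cons_of_pos (show pz (0:ℤ) = true from rfl)]
  congr 2
  rw [List.filter_reverse, List.filter_map]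
  have h1 : ((List.ofFn f).filter (pz ∘ fun x => -x)) = (List.ofFn f).filter qz := by
    apply List.filter_congr
    intro x _
    show decide (0 ≤ -x) = decide (x ≤ 0)
    simp
  rw [h1, List.map_reverse]

private lemma not_zero_mem_A {n : ℕ} {f : Fin n → ℤ} (hf : ∀ i, f i ≠ 0) :
    (0:ℤ) ∉ (((List.ofFn f).filter qz).reverse.map fun x => -x) := by
  intro h
  rw [List.mem_map] at h
  obtain ⟨x, hx, hx0⟩ := h
  rw [List.mem_reverse] at hx
  have h1 := List.mem_of_mem_filter hx
  rw [List.mem_ofFn] at h1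
  obtain ⟨i, rfl⟩ := h1
  exact hf i (by omega)

/-- etaSigma equality reduces to equality of positive- and negative-part filters. -/
private lemma eta_iff {n : ℕ} {f g : Fin n → ℤ} (hf : ∀ i, f i ≠ 0) (hg : ∀ i, g i ≠ 0) :
    (etaSigma n f = etaSigma n g ↔
      ((List.ofFn f).filter pz = (List.ofFn g).filter pz ∧
       (List.ofFn f).filter qz = (List.ofFn g).filter qz)) := by
  rw [eta_eq, eta_eq]
  rw [(List.map_injective_iff.mpr (add_left_injective (1:ℤ))).eq_iff]
  rw [split0 _ _ _ _ (not_zero_mem_A hf) (not_zero_mem_A hg)]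
  rw [(List.map_injective_iff.mpr
      (fun a b h => neg_injective h : Function.Injective (fun x : ℤ => -x))).eq_iff]
  rw [List.reverse_inj]
  exact and_comm

private lemma decomp (l : List ℤ) (i : ℕ) (h : i + 1 < l.length) :
    l = l.take i ++ l[i]'(by omega) :: l[i+1]'h :: l.drop (i+2) := by
  conv_lhs => rw [← List.take_append_drop i l]
  rw [List.drop_eq_getElem_cons (show i < l.length by omega),
    List.drop_eq_getElem_cons (show i + 1 < l.length from h)]

private lemma decompFn {n : ℕ} (f : Fin n → ℤ) (i j : Fin n) (hij : (j:ℕ) = (i:ℕ) + 1) :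
    List.ofFn f =
      (List.ofFn f).take i ++ f i :: f j :: (List.ofFn f).drop ((i:ℕ)+2) := by
  have h : (i:ℕ) + 1 < (List.ofFn f).length := by simp; omega
  have H := decomp (List.ofFn f) i h
  have hj : j = ⟨(i:ℕ)+1, by simpa using h⟩ := Fin.ext (by simp [hij])
  have e1 : f i = (List.ofFn f)[(i:ℕ)]'(by omega) := by
    rw [List.getElem_ofFn]
  have e2 : f j = (List.ofFn f)[(i:ℕ)+1]'h := by
    rw [List.getElem_ofFn]
    try exact congrArg f (Fin.ext (by simp [hij]))
  rw [e1, e2]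
  exact H

private lemma filter_swap (P : ℤ → Bool) (l₁ l₂ : List ℤ) (a b : ℤ) :
    ((l₁ ++ a :: b :: l₂).filter P = (l₁ ++ b :: a :: l₂).filter P ↔
      (P a = true → P b = true → a = b)) := by
  simp only [List.filter_append, List.filter_cons, List.append_cancel_left_eq]
  cases hPa : P a <;> cases hPb : P b <;> simp [List.cons.injEq]
  exact fun h => h.symm

end Aux

/-- For Simion's map `η_σ`: if two signed permutations agree except that two adjacent
one-line entries are swapped, then they have the same image iff the two swapped entries
have opposite signs; and if they agree except in the sign of the first entry, then
their images differ. -/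
theorem stmt_8 (n : ℕ) (f g : Fin n → ℤ)
    (hf : IsSignedPerm n f) (hg : IsSignedPerm n g) :
    (∀ i j : Fin n, (j : ℕ) = (i : ℕ) + 1 →
      g i = f j → g j = f i → (∀ k : Fin n, k ≠ i → k ≠ j → g k = f k) →
      (etaSigma n f = etaSigma n g ↔ f i * f j < 0)) ∧
    (∀ h0 : 0 < n, g ⟨0, h0⟩ = -f ⟨0, h0⟩ →
      (∀ k : Fin n, k ≠ ⟨0, h0⟩ → g k = f k) →
      etaSigma n f ≠ etaSigma n g) := by
  have hf0 : ∀ i, f i ≠ 0 := fun i hi => by have := (hf.1 i).1; rw [hi] at this; simp at this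
  have hg0 : ∀ i, g i ≠ 0 := fun i hi => by have := (hg.1 i).1; rw [hi] at this; simp at this
  constructor
  · intro i j hij hgi hgj hk
    have hij' : i ≠ j := Fin.ne_of_val_ne (by omega)
    have hab : f i ≠ f j := fun h =>
      hij' (hf.2 (show (f i).natAbs = (f j).natAbs by rw [h]))
    have htake : (List.ofFn g).take i = (List.ofFn f).take i := by
      apply List.ext_getElem (by simp)
      intro m h1 h2
      have hm : m < (i:ℕ) := by simp at h1; omega
      rw [List.getElem_take, List.getElem_take, List.getElem_ofFn, List.getElem_ofFn]
      exact hk _ (Fin.ne_of_val_ne (show m ≠ (i:ℕ) by omega))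
        (Fin.ne_of_val_ne (show m ≠ (j:ℕ) by omega))
    have hdrop : (List.ofFn g).drop ((i:ℕ)+2) = (List.ofFn f).drop ((i:ℕ)+2) := by
      apply List.ext_getElem (by simp)
      intro m h1 h2
      rw [List.getElem_drop, List.getElem_drop, List.getElem_ofFn, List.getElem_ofFn]
      exact hk _ (Fin.ne_of_val_ne (show (i:ℕ)+2+m ≠ (i:ℕ) by omega))
        (Fin.ne_of_val_ne (show (i:ℕ)+2+m ≠ (j:ℕ) by omega))
    have hdf := decompFn f i j hij
    have hdg : List.ofFn g =
        (List.ofFn f).take i ++ f j :: f i :: (List.ofFn f).drop ((i:ℕ)+2) := by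
      conv_lhs => rw [decompFn g i j hij]
      rw [htake, hdrop, hgi, hgj]
    rw [eta_iff hf0 hg0, hdf, hdg, filter_swap, filter_swap]
    have h1 : f i ≠ 0 := hf0 i
    have h2 : f j ≠ 0 := hf0 j
    constructor
    · rintro ⟨hp, hq⟩
      rcases h1.lt_or_gt with hi0 | hi0 <;> rcases h2.lt_or_gt with hj0 | hj0
      · exact absurd (hq (by simp only [qz, decide_eq_true_eq]; omega)
          (by simp only [qz, decide_eq_true_eq]; omega)) hab
      · exact mul_neg_of_neg_of_pos hi0 hj0
      · exact mul_neg_of_pos_of_neg hi0 hj0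
      · exact absurd (hp (by simp only [pz, decide_eq_true_eq]; omega)
          (by simp only [pz, decide_eq_true_eq]; omega)) hab
    · intro hmul
      rcases h1.lt_or_gt with hi0 | hi0 <;> rcases h2.lt_or_gt with hj0 | hj0
      · exact absurd hmul (mul_pos_of_neg_of_neg hi0 hj0).asymm
      · refine ⟨fun hpa _ => absurd hpa ?_, fun _ hqb => absurd hqb ?_⟩
        · simp only [pz, decide_eq_true_eq]; omega
        · simp only [qz, decide_eq_true_eq]; omega
      · refine ⟨fun _ hpb => absurd hpb ?_, fun hqa _ => absurd hqa ?_⟩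
        · simp only [pz, decide_eq_true_eq]; omega
        · simp only [qz, decide_eq_true_eq]; omega
      · exact absurd hmul (mul_pos hi0 hj0).asymm
  · intro h0 hg00 hk heq
    set i0 : Fin n := ⟨0, h0⟩ with hi0def
    have hd1 : List.ofFn f = f i0 :: (List.ofFn f).drop 1 := by
      conv_lhs => rw [← (List.drop_zero : (List.ofFn f).drop 0 = List.ofFn f),
        List.drop_eq_getElem_cons (show 0 < (List.ofFn f).length by simp; omega)]
      rw [List.getElem_ofFn]
    have hdrop : (List.ofFn g).drop 1 = (List.ofFn f).drop 1 := by
      apply List.ext_getElem (by simp)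
      intro m h1 h2
      rw [List.getElem_drop, List.getElem_drop, List.getElem_ofFn, List.getElem_ofFn]
      exact hk _ (Fin.ne_of_val_ne (show 1+m ≠ 0 by omega))
    have hd2 : List.ofFn g = (- f i0) :: (List.ofFn f).drop 1 := by
      conv_lhs => rw [← (List.drop_zero : (List.ofFn g).drop 0 = List.ofFn g),
        List.drop_eq_getElem_cons (show 0 < (List.ofFn g).length by simp; omega)]
      rw [List.getElem_ofFn, hdrop, ← hg00]
    rw [eta_iff hf0 hg0, hd1, hd2] at heq
    obtain ⟨hp, hq⟩ := heq
    have h1 : f i0 ≠ 0 := hf0 i0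
    rcases h1.lt_or_gt with h | h
    · rw [List.filter_cons_of_pos (show qz (f i0) = true by
          simp only [qz, decide_eq_true_eq]; omega),
        List.filter_cons_of_neg (show ¬ qz (- f i0) = true by
          simp only [qz, decide_eq_true_eq]; omega)] at hq
      have hlen := congrArg List.length hq
      rw [List.length_cons] at hlen
      omega
    · rw [List.filter_cons_of_pos (show pz (f i0) = true by
          simp only [pz, decide_eq_true_eq]; omega),
        List.filter_cons_of_neg (show ¬ pz (- f i0) = true by
          simp only [pz, decide_eq_true_eq]; omega)] at hp
      have hlen := congrArg List.length hp
      rw [List.length_cons] at hlen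
      omega
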